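/- The dimension of the standard complement W_K over F is at most max{deg(u), deg(v)} − [deg(v − u) ≤ deg(u) − 1], where [·] is 1 if the condition holds and 0 otherwise. In particular, W_K is finite-dimensional. -/

import Mathlib

open Polynomial

/-- The `F`-linear map for polynomial reduction w.r.t. `K = u/v`:
`φ_K(p) = u·σ_y(p) − v·p`. -/
noncomputable def phiK {F : Type*} [Field F] (u v : F[X]) : F[X] →ₗ[F] F[X] where
  toFun p := u * p.comp (X + Polynomial.C 1) - v * p
  map_add' p q := by simp [add_comp]; ring
  map_smul' c p := by simp [smul_comp, smul_sub, Polynomial.smul_eq_C_mul]; ring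

/-- The standard complement `W_K`. -/
noncomputable def WK {F : Type*} [Field F] (u v : F[X]) : Submodule F F[X] :=
  Submodule.span F
    { q | ∃ ℓ : ℕ, q = X ^ ℓ ∧
        ∀ r ∈ LinearMap.range (phiK u v), r ≠ 0 → r.natDegree ≠ ℓ }

section Aux

variable {F : Type*} [Field F]

theorem phiK_apply (u v p : F[X]) :
    phiK u v p = u * p.comp (X + C 1) - v * p := rfl

theorem sig_natDegree (p : F[X]) : (p.comp (X + C 1)).natDegree = p.natDegree := by
  rw [natDegree_comp, natDegree_X_add_C, mul_one]

theorem sig_coeff_top {p : F[X]} {D : ℕ} (h : p.natDegree ≤ D) :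
    (p.comp (X + C 1)).coeff D = p.coeff D := by
  rcases eq_or_ne p 0 with rfl | hp
  · simp
  rcases lt_or_eq_of_le h with h' | h'
  · rw [coeff_eq_zero_of_natDegree_lt, coeff_eq_zero_of_natDegree_lt h']
    rwa [sig_natDegree]
  · subst h'
    calc (p.comp (X + C 1)).coeff p.natDegree
        = (p.comp (X + C 1)).leadingCoeff := by
          rw [Polynomial.leadingCoeff, sig_natDegree]
      _ = p.leadingCoeff * (X + C 1 : F[X]).leadingCoeff ^ p.natDegree :=
          leadingCoeff_comp (q := X + C 1) (by rw [natDegree_X_add_C]; exact one_ne_zero)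
      _ = p.coeff p.natDegree := by
          rw [leadingCoeff_X_add_C, one_pow, mul_one]; rfl

theorem phi_natDegree_le {u v : F[X]} {a D : ℕ} (hU : u.natDegree ≤ a)
    (hV : v.natDegree ≤ a) {p : F[X]} (hp : p.natDegree ≤ D) :
    (phiK u v p).natDegree ≤ a + D := by
  refine (natDegree_sub_le _ _).trans (max_le ?_ ?_)
  · exact natDegree_mul_le.trans (add_le_add hU (by rw [sig_natDegree]; exact hp))
  · exact natDegree_mul_le.trans (add_le_add hV hp)

theorem phi_coeff_top {u v : F[X]} {a D : ℕ} (hU : u.natDegree ≤ a)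
    (hV : v.natDegree ≤ a) {p : F[X]} (hp : p.natDegree ≤ D) :
    (phiK u v p).coeff (a + D) = (u.coeff a - v.coeff a) * p.coeff D := by
  rw [phiK_apply, coeff_sub,
    coeff_mul_add_eq_of_natDegree_le hU (by rw [sig_natDegree]; exact hp),
    coeff_mul_add_eq_of_natDegree_le hV hp, sig_coeff_top hp, sub_mul]

theorem phi_degree_lt {u v : F[X]} {a D : ℕ} (hU : u.natDegree ≤ a)
    (hV : v.natDegree ≤ a) (hc : u.coeff a = v.coeff a) {p : F[X]}
    (hp : p.natDegree ≤ D) : (phiK u v p).degree < ((a + D : ℕ) : WithBot ℕ) := by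
  rw [degree_lt_iff_coeff_zero]
  intro n hn
  rcases eq_or_lt_of_le hn with h | h
  · rw [← h, phi_coeff_top hU hV hp, hc, sub_self, zero_mul]
  · exact coeff_eq_zero_of_natDegree_lt ((phi_natDegree_le hU hV hp).trans_lt h)

theorem phi_pow_coeff {u v : F[X]} {m1 : ℕ} (hU : u.natDegree ≤ m1 + 1)
    (hV : v.natDegree ≤ m1 + 1) (d : ℕ) :
    (phiK u v (X ^ d)).coeff (m1 + d) =
      u.coeff (m1 + 1) * d + (u.coeff m1 - v.coeff m1) := by
  have hX1 : (X + C 1 : F[X]) = X + 1 := by rw [C_1]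
  cases d with
  | zero => simp [phiK_apply, coeff_sub]
  | succ k =>
    have hsplit : phiK u v (X ^ (k + 1)) =
        u * ((X + C 1) ^ (k + 1) - X ^ (k + 1)) + (u - v) * X ^ (k + 1) := by
      rw [phiK_apply, X_pow_comp]; ring
    have hw : ((X + C 1 : F[X]) ^ (k + 1) - X ^ (k + 1)).natDegree ≤ k := by
      rw [natDegree_le_iff_coeff_eq_zero]
      intro N hN
      rw [coeff_sub, hX1, coeff_X_add_one_pow, coeff_X_pow]
      by_cases hNk : N = k + 1
      · rw [hNk, Nat.choose_self, if_pos rfl]; norm_num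
      · rw [Nat.choose_eq_zero_of_lt (by omega), if_neg (by omega)]; simp
    have h1 : (u * ((X + C 1) ^ (k + 1) - X ^ (k + 1))).coeff (m1 + (k + 1)) =
        u.coeff (m1 + 1) * ((k : F) + 1) := by
      have hidx : m1 + (k + 1) = (m1 + 1) + k := by omega
      rw [hidx, coeff_mul_add_eq_of_natDegree_le hU hw]
      congr 1
      rw [coeff_sub, hX1, coeff_X_add_one_pow, coeff_X_pow, if_neg (by omega),
        Nat.choose_succ_self_right]
      push_cast; ring
    have h2 : ((u - v) * X ^ (k + 1)).coeff (m1 + (k + 1)) =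
        u.coeff m1 - v.coeff m1 := by
      rw [coeff_mul_X_pow, coeff_sub]
    rw [hsplit, coeff_add, h1, h2]
    push_cast; ring

theorem phi_ker (u : F[X]) (n : ℕ) : ∀ p v : F[X], p.natDegree ≤ n → v ≠ 0 →
    1 ≤ v.natDegree → (∀ k : ℤ, IsCoprime u (v.comp (X + C (k : F)))) →
    u * p.comp (X + C 1) = v * p → p = 0 := by
  induction n using Nat.strong_induction_on with
  | _ n ih =>
    intro p v hpn hv hv1 hco heq
    have hcov : IsCoprime v u := by
      simpa only [Int.cast_zero, map_zero, add_zero, comp_X] using (hco 0).symm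
    have hXcomp : ((X : F[X]) + C 1).comp (X + C (-1)) = X := by
      rw [add_comp, X_comp, C_comp, add_assoc, ← C_add]
      norm_num
    have hXcomp' : ((X : F[X]) + C (-1)).comp (X + C 1) = X := by
      rw [add_comp, X_comp, C_comp, add_assoc, ← C_add]
      norm_num
    have hdvd : v ∣ p.comp (X + C 1) :=
      hcov.dvd_of_dvd_mul_left ⟨p, heq⟩
    obtain ⟨w, hw⟩ := hdvd
    set v' := v.comp (X + C (-1)) with hv'def
    set p₁ := w.comp (X + C (-1)) with hp₁def
    have hpfact : p = v' * p₁ := by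
      have h2 := congrArg (fun q : F[X] => q.comp (X + C (-1))) hw
      simp only [mul_comp] at h2
      rw [comp_assoc, hXcomp, comp_X] at h2
      exact h2
    have hvv' : v'.comp (X + C 1) = v := by
      rw [hv'def, comp_assoc, hXcomp', comp_X]
    have hv' : v' ≠ 0 := by
      intro h
      apply hv
      rw [← hvv', h, zero_comp]
    have hv'1 : v'.natDegree = v.natDegree := by
      rw [hv'def, natDegree_comp, natDegree_X_add_C, mul_one]
    have hco' : ∀ k : ℤ, IsCoprime u (v'.comp (X + C (k : F))) := by
      intro k
      have hcomp : v'.comp (X + C (k : F)) = v.comp (X + C ((k - 1 : ℤ) : F)) := by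
        rw [hv'def, comp_assoc]
        congr 1
        rw [add_comp, X_comp, C_comp, add_assoc, ← C_add]
        push_cast
        ring_nf
      rw [hcomp]
      exact hco (k - 1)
    have hwp : p₁.comp (X + C 1) = w := by
      rw [hp₁def, comp_assoc, hXcomp', comp_X]
    have heq' : u * p₁.comp (X + C 1) = v' * p₁ := by
      rw [hwp]
      have h3 : v * (u * w) = v * (v' * p₁) := by
        calc v * (u * w) = u * (v * w) := by ring
          _ = u * p.comp (X + C 1) := by rw [hw]
          _ = v * p := heq
          _ = v * (v' * p₁) := by rw [← hpfact]
      exact mul_left_cancel₀ hv h3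
    have hp₁0 : p₁ = 0 := by
      rcases eq_or_ne p₁ 0 with h1 | h1
      · exact h1
      · have hpd : p.natDegree = v'.natDegree + p₁.natDegree := by
          rw [hpfact, natDegree_mul hv' h1]
        exact ih p₁.natDegree (by omega) p₁ v' le_rfl hv' (by omega) hco' heq'
    rw [hpfact, hp₁0, mul_zero]

theorem WK_coeff {u v : F[X]} {p : F[X]} (hp : p ∈ WK u v) {n : ℕ}
    (hn : ¬ ∀ r ∈ LinearMap.range (phiK u v), r ≠ 0 → r.natDegree ≠ n) :
    p.coeff n = 0 := by
  induction hp using Submodule.span_induction with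
  | mem x hx =>
    obtain ⟨ℓ, rfl, hℓ⟩ := hx
    rw [coeff_X_pow, if_neg]
    intro h
    exact hn (h ▸ hℓ)
  | zero => simp
  | add x y _ _ hx hy => simp [hx, hy]
  | smul a x _ hx => simp [hx]

theorem WK_findim {u v : F[X]} (T : Finset ℕ)
    (hT : ∀ ℓ : ℕ, (∀ r ∈ LinearMap.range (phiK u v), r ≠ 0 → r.natDegree ≠ ℓ) → ℓ ∈ T) :
    FiniteDimensional F (WK u v) ∧ Module.finrank F (WK u v) ≤ T.card := by
  classical
  let f : WK u v →ₗ[F] (T → F) :=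
    LinearMap.pi fun t => (lcoeff F (t : ℕ)).comp (WK u v).subtype
  have hinj : Function.Injective f := by
    intro x y hxy
    apply Subtype.ext
    apply Polynomial.ext
    intro n
    by_cases hn : ∀ r ∈ LinearMap.range (phiK u v), r ≠ 0 → r.natDegree ≠ n
    · have := congrFun hxy ⟨n, hT n hn⟩
      simpa [f] using this
    · rw [WK_coeff x.2 hn, WK_coeff y.2 hn]
  refine ⟨FiniteDimensional.of_injective f hinj, ?_⟩
  have h := LinearMap.finrank_le_finrank_of_injective hinj
  rwa [Module.finrank_pi, Fintype.card_coe] at h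

end Aux

open Classical in
/-- `W_K` is finite-dimensional of dimension at most
`max(deg u, deg v) − [deg(v−u) ≤ deg(u) − 1]`. -/
theorem dim_WK_le
    (F : Type*) [Field F] [CharZero F] (u v : F[X])
    (hu : u ≠ 0) (hv : v ≠ 0) (huv : IsCoprime u v)
    (hsr : ∀ k : ℤ, IsCoprime u (v.comp (X + Polynomial.C (k : F)))) :
    FiniteDimensional F (WK u v) ∧
    Module.finrank F (WK u v) ≤
      max u.natDegree v.natDegree - (if (v - u).degree < u.degree then 1 else 0) := by
  classical
  set m := max u.natDegree v.natDegree with hm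
  by_cases hcase : (v - u).degree < u.degree
  · -- leading coefficients agree (cancellation case)
    have hdvu : v.degree = u.degree := by
      have h := degree_add_eq_left_of_degree_lt (p := u) (q := v - u) hcase
      have h2 : u + (v - u) = v := by ring
      rwa [h2] at h
    have hnvu : v.natDegree = u.natDegree := natDegree_eq_of_degree_eq hdvu
    have hmu : m = u.natDegree := by rw [hm, hnvu, max_self]
    have hdum : u.degree = (m : WithBot ℕ) := by
      rw [degree_eq_natDegree hu, hmu]
    have hc0 : u.coeff m ≠ 0 := by
      rw [hmu]
      exact mt leadingCoeff_eq_zero.mp hu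
    have hvc : v.coeff m = u.coeff m := by
      have h0 : (v - u).coeff m = 0 :=
        coeff_eq_zero_of_degree_lt (hcase.trans_le hdum.le)
      rw [coeff_sub] at h0
      exact sub_eq_zero.mp h0
    rcases Nat.eq_zero_or_pos m with hm0 | hmpos
    · -- u = v constant
      have hu0 : u.natDegree = 0 := by omega
      have hvu0 : v - u = 0 := by
        have hud0 : u.degree = ((0 : ℕ) : WithBot ℕ) := by rw [← hm0]; exact hdum
        refine degree_eq_bot.mp (Nat.WithBot.lt_zero_iff.mp ?_)
        rw [← Nat.cast_zero, ← hud0]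
        exact hcase
      have huv' : v = u := by rwa [sub_eq_zero] at hvu0
      have hT : ∀ ℓ : ℕ,
          (∀ r ∈ LinearMap.range (phiK u v), r ≠ 0 → r.natDegree ≠ ℓ) →
          ℓ ∈ (∅ : Finset ℕ) := by
        intro ℓ hℓ
        exfalso
        set r := phiK u v (X ^ (ℓ + 1)) with hr
        obtain ⟨a, ha⟩ : ∃ a, u = C a := ⟨u.coeff 0, eq_C_of_natDegree_eq_zero hu0⟩
        have ha0 : a ≠ 0 := by
          rintro rfl
          exact hu (by rw [ha, C_0])
        have hX1 : (X + C 1 : F[X]) = X + 1 := by rw [C_1]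
        have hrval : r = C a * ((X + C 1) ^ (ℓ + 1) - X ^ (ℓ + 1)) := by
          rw [hr, phiK_apply, huv', ha, X_pow_comp]; ring
        have hcoeff : r.coeff ℓ = a * ((ℓ + 1 : ℕ) : F) := by
          rw [hrval, coeff_C_mul, coeff_sub, coeff_X_pow, if_neg (by omega), hX1,
            coeff_X_add_one_pow, Nat.choose_succ_self_right]
          ring
        have hcast : ((ℓ + 1 : ℕ) : F) ≠ 0 := Nat.cast_ne_zero.mpr (Nat.succ_ne_zero ℓ)
        have hne0 : r ≠ 0 := by
          intro h
          rw [h, coeff_zero] at hcoeff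
          exact (mul_ne_zero ha0 hcast) hcoeff.symm
        have hwdeg : ((X + C 1 : F[X]) ^ (ℓ + 1) - X ^ (ℓ + 1)).natDegree ≤ ℓ := by
          rw [natDegree_le_iff_coeff_eq_zero]
          intro N hN
          rw [coeff_sub, hX1, coeff_X_add_one_pow, coeff_X_pow]
          by_cases hNk : N = ℓ + 1
          · rw [hNk, Nat.choose_self, if_pos rfl]; norm_num
          · rw [Nat.choose_eq_zero_of_lt (by omega), if_neg (by omega)]; simp
        have hdeg : r.natDegree = ℓ := by
          have h1 : ℓ ≤ r.natDegree := le_natDegree_of_ne_zero (by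
            rw [hcoeff]; exact mul_ne_zero ha0 hcast)
          have h2 : r.natDegree ≤ ℓ := by
            rw [hrval]
            refine natDegree_mul_le.trans ?_
            rw [natDegree_C]
            simpa using hwdeg
          omega
        exact hℓ r ⟨X ^ (ℓ + 1), rfl⟩ hne0 hdeg
      obtain ⟨h1, h2⟩ := WK_findim (∅ : Finset ℕ) hT
      exact ⟨h1, le_trans (by simpa using h2) (Nat.zero_le _)⟩
    · -- m ≥ 1
      obtain ⟨m1, hm1⟩ : ∃ m1, m = m1 + 1 := ⟨m - 1, by omega⟩
      have huD : u.natDegree ≤ m1 + 1 := by omega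
      have hvD : v.natDegree ≤ m1 + 1 := by omega
      have hvc' : u.coeff (m1 + 1) = v.coeff (m1 + 1) := by
        rw [← hm1]; exact hvc.symm
      set c := u.coeff (m1 + 1) with hcdef
      set e := u.coeff m1 - v.coeff m1 with hedef
      have hc : c ≠ 0 := by rw [hcdef, ← hm1]; exact hc0
      obtain ⟨D, hD⟩ : ∃ D : ℕ, ∀ d : ℕ, D < d → c * d + e ≠ 0 := by
        by_cases hex : ∃ d : ℕ, c * d + e = 0
        · obtain ⟨D, hD⟩ := hex
          refine ⟨D, fun d hd h => ?_⟩
          have h2 : c * (d : F) = c * (D : F) := by linear_combination h - hD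
          have h3 : (d : F) = (D : F) := mul_left_cancel₀ hc h2
          have : d = D := Nat.cast_injective h3
          omega
        · exact ⟨0, fun d _ h => hex ⟨d, h⟩⟩
      set M := m1 + D with hM
      set V := degreeLT F (M + 1) with hVdef
      set B := LinearMap.range (phiK u v) ⊓ V with hB
      haveI : Module.Finite F V := Module.Finite.equiv (degreeLTEquiv F (M + 1)).symm
      have hfV : Module.finrank F V = M + 1 := by
        rw [(degreeLTEquiv F (M + 1)).finrank_eq, Module.finrank_fin_fun]
      have hWV : WK u v ≤ V := by
        intro p hp
        rw [hVdef]
        rw [mem_degreeLT, degree_lt_iff_coeff_zero]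
        intro n hn
        apply WK_coeff hp
        push_neg
        set d := n - m1 with hd
        have hdn : m1 + d = n := by omega
        have hd0 : D < d := by omega
        have hcoeff : (phiK u v (X ^ d)).coeff (m1 + d) = c * d + e :=
          phi_pow_coeff huD hvD d
        have hne0 : phiK u v (X ^ d) ≠ 0 := by
          intro h
          rw [h, coeff_zero] at hcoeff
          exact hD d hd0 hcoeff.symm
        have hndeg : (phiK u v (X ^ d)).natDegree = n := by
          have h1 : m1 + d ≤ (phiK u v (X ^ d)).natDegree :=
            le_natDegree_of_ne_zero (by rw [hcoeff]; exact hD d hd0)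
          have h2 : (phiK u v (X ^ d)).degree < (((m1 + 1) + d : ℕ) : WithBot ℕ) :=
            phi_degree_lt huD hvD hvc' (natDegree_X_pow d).le
          have h3 : (phiK u v (X ^ d)).natDegree < (m1 + 1) + d :=
            (natDegree_lt_iff_degree_lt hne0).mpr h2
          omega
        exact ⟨phiK u v (X ^ d), ⟨X ^ d, rfl⟩, hne0, hndeg⟩
      have hdisj : WK u v ⊓ B = ⊥ := by
        rw [eq_bot_iff]
        intro p hp
        rw [Submodule.mem_inf] at hp
        obtain ⟨hpW, hpB⟩ := hp
        rw [hB, Submodule.mem_inf] at hpB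
        rw [Submodule.mem_bot]
        by_contra hp0
        have hco' := WK_coeff hpW (n := p.natDegree)
          (by push_neg; exact ⟨p, hpB.1, hp0, rfl⟩)
        exact hp0 (leadingCoeff_eq_zero.mp hco')
      haveI hWfin : FiniteDimensional F (WK u v) :=
        Submodule.finiteDimensional_of_le hWV
      haveI hBfin : FiniteDimensional F B :=
        Submodule.finiteDimensional_of_le (inf_le_right : B ≤ V)
      have hv1 : 1 ≤ v.natDegree := by omega
      have hqDle : ∀ q : F[X], q ∈ degreeLT F (D + 1) → q.natDegree ≤ D := by
        intro q hq
        rw [mem_degreeLT] at hq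
        rcases eq_or_ne q 0 with rfl | hq0
        · simp
        · have := (natDegree_lt_iff_degree_lt hq0).mpr hq
          omega
      have hmemB : ∀ q : F[X], q ∈ degreeLT F (D + 1) → phiK u v q ∈ B := by
        intro q hq
        rw [hB, Submodule.mem_inf]
        refine ⟨⟨q, rfl⟩, ?_⟩
        rw [hVdef, mem_degreeLT]
        have h2 := phi_degree_lt huD hvD hvc' (hqDle q hq)
        have hMM : (m1 + 1) + D = M + 1 := by omega
        rwa [hMM] at h2
      let g : degreeLT F (D + 1) →ₗ[F] B :=
        LinearMap.codRestrict B ((phiK u v).comp (Submodule.subtype _))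
          (fun q => hmemB q q.2)
      have hginj : Function.Injective g := by
        rw [← LinearMap.ker_eq_bot, eq_bot_iff]
        intro z hz
        rw [LinearMap.mem_ker] at hz
        have hz' : phiK u v (z : F[X]) = 0 := congrArg Subtype.val hz
        rw [phiK_apply, sub_eq_zero] at hz'
        have hz0 : (z : F[X]) = 0 :=
          phi_ker u ((z : F[X]).natDegree) (z : F[X]) v le_rfl hv hv1 hsr hz'
        rw [Submodule.mem_bot]
        exact Subtype.ext hz0
      have hrank : D + 1 ≤ Module.finrank F B := by
        have h := LinearMap.finrank_le_finrank_of_injective hginj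
        rwa [(degreeLTEquiv F (D + 1)).finrank_eq, Module.finrank_fin_fun] at h
      have hsum := Submodule.finrank_sup_add_finrank_inf_eq (WK u v) B
      rw [hdisj, finrank_bot] at hsum
      have hsup : Module.finrank F ↥(WK u v ⊔ B) ≤ M + 1 := by
        rw [← hfV]
        exact Submodule.finrank_mono (sup_le hWV inf_le_right)
      refine ⟨hWfin, ?_⟩
      rw [if_pos hcase]
      omega
  · -- leading coefficients differ
    have hne : u.coeff m ≠ v.coeff m := by
      intro heq
      apply hcase
      rcases lt_trichotomy u.natDegree v.natDegree with h | h | h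
      · exfalso
        have hm' : m = v.natDegree := by rw [hm]; omega
        have h1 : v.coeff m ≠ 0 := by
          rw [hm']
          exact mt leadingCoeff_eq_zero.mp hv
        apply h1
        rw [← heq]
        exact coeff_eq_zero_of_natDegree_lt (by omega)
      · have hm' : m = u.natDegree := by rw [hm, h, max_self]
        have hvu : (v - u).coeff m = 0 := by
          rw [coeff_sub, heq, sub_self]
        have hdu : u.degree = (m : WithBot ℕ) := by
          rw [degree_eq_natDegree hu, hm']
        rcases eq_or_ne (v - u) 0 with h0 | h0
        · rw [h0, degree_zero, hdu]
          exact WithBot.bot_lt_coe m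
        · have hle : (v - u).natDegree ≤ m := by
            refine (natDegree_sub_le v u).trans ?_
            rw [hm, max_comm]
          have hlt : (v - u).natDegree < m := by
            rcases lt_or_eq_of_le hle with h1 | h1
            · exact h1
            · exfalso
              have h2 := mt leadingCoeff_eq_zero.mp h0
              rw [Polynomial.leadingCoeff, h1] at h2
              exact h2 hvu
          rw [degree_eq_natDegree h0, hdu]
          exact_mod_cast hlt
      · exfalso
        have hm' : m = u.natDegree := by rw [hm]; omega
        have h1 : u.coeff m ≠ 0 := by
          rw [hm']
          exact mt leadingCoeff_eq_zero.mp hu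
        apply h1
        rw [heq]
        exact coeff_eq_zero_of_natDegree_lt (by omega)
    have hT : ∀ ℓ : ℕ,
        (∀ r ∈ LinearMap.range (phiK u v), r ≠ 0 → r.natDegree ≠ ℓ) →
        ℓ ∈ Finset.range m := by
      intro ℓ hℓ
      rw [Finset.mem_range]
      by_contra hge
      push_neg at hge
      set d := ℓ - m with hd
      have hdm : m + d = ℓ := by omega
      have hcoeff : (phiK u v (X ^ d)).coeff (m + d) = u.coeff m - v.coeff m := by
        rw [phi_coeff_top (le_max_left _ _) (le_max_right _ _) (natDegree_X_pow d).le,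
          coeff_X_pow, if_pos rfl, mul_one]
      have hne' : u.coeff m - v.coeff m ≠ 0 := sub_ne_zero.mpr hne
      have hr0 : phiK u v (X ^ d) ≠ 0 := by
        intro h
        rw [h, coeff_zero] at hcoeff
        exact hne' hcoeff.symm
      have hdeg : (phiK u v (X ^ d)).natDegree = ℓ := by
        have hle := phi_natDegree_le (u := u) (v := v)
          (le_max_left _ _) (le_max_right _ _) (natDegree_X_pow d).le
        have hge' : m + d ≤ (phiK u v (X ^ d)).natDegree :=
          le_natDegree_of_ne_zero (by rw [hcoeff]; exact hne')
        omega
      exact hℓ _ ⟨X ^ d, rfl⟩ hr0 hdeg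
    obtain ⟨h1, h2⟩ := WK_findim (Finset.range m) hT
    refine ⟨h1, ?_⟩
    rw [if_neg hcase, Nat.sub_zero]
    rw [Finset.card_range] at h2
    exact h2
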